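/- A 1-quasiregular linear map is conformal: if A : ℝⁿ → ℝⁿ is linear with det A > 0 and ‖A‖ⁿ = det A, then A is a positive scalar multiple of an orthogonal transformation, i.e. ⟪A u, A v⟫ = ‖A‖²·⟪u, v⟫ for all u, v. -/
import Mathlib

open RealInnerProductSpace

/-- A `1`-quasiregular linear map is conformal: if `det A > 0` and `‖A‖ⁿ = det A`,
then `A` is a positive scalar multiple of an orthogonal transformation, i.e.
`⟪A u, A v⟫ = ‖A‖² ⟪u, v⟫` for all `u, v`. -/
theorem one_quasiregular_linear_is_conformal
    (n : ℕ) (hn : 1 ≤ n)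
    (A : EuclideanSpace ℝ (Fin n) →L[ℝ] EuclideanSpace ℝ (Fin n))
    (hdet : 0 < A.det) (heq : ‖A‖ ^ n = A.det) :
    ∀ u v : EuclideanSpace ℝ (Fin n), ⟪A u, A v⟫ = ‖A‖ ^ 2 * ⟪u, v⟫ := by
  classical
  set E := EuclideanSpace ℝ (Fin n)
  set B : E →L[ℝ] E := (ContinuousLinearMap.adjoint A).comp A with hBdef
  have hBapply : ∀ x, B x = ContinuousLinearMap.adjoint A (A x) := fun x => rfl
  have hBinner : ∀ x y : E, ⟪B x, y⟫ = ⟪A x, A y⟫ := by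
    intro x y
    rw [hBapply, ContinuousLinearMap.adjoint_inner_left]
  have hBsymm : (B : E →ₗ[ℝ] E).IsSymmetric := by
    intro x y
    rw [show ((B : E →ₗ[ℝ] E) x) = B x from rfl, show ((B : E →ₗ[ℝ] E) y) = B y from rfl,
      hBinner, hBapply, ContinuousLinearMap.adjoint_inner_right]
  have hrank : Module.finrank ℝ E = n := finrank_euclideanSpace_fin
  set b := hBsymm.eigenvectorBasis hrank with hb
  set μ := hBsymm.eigenvalues hrank with hμ
  have hBb : ∀ i, B (b i) = μ i • b i := fun i => hBsymm.apply_eigenvectorBasis hrank i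
  -- eigenvalues are bounded by ‖A‖²
  have hnormb : ∀ i, ‖b i‖ = 1 := fun i => b.orthonormal.1 i
  have hμ_eq : ∀ i, μ i = ‖A (b i)‖ ^ 2 := by
    intro i
    have h1 : ⟪B (b i), b i⟫ = μ i := by
      rw [hBb i, real_inner_smul_left, real_inner_self_eq_norm_sq, hnormb i]
      ring
    have h2 : ⟪B (b i), b i⟫ = ‖A (b i)‖ ^ 2 := by
      rw [hBinner, real_inner_self_eq_norm_sq]
    rw [← h1, h2]
  have hμ_nonneg : ∀ i, 0 ≤ μ i := fun i => by rw [hμ_eq i]; positivity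
  have hμ_le : ∀ i, μ i ≤ ‖A‖ ^ 2 := by
    intro i
    rw [hμ_eq i]
    have := A.le_opNorm (b i)
    rw [hnormb i, mul_one] at this
    exact pow_le_pow_left₀ (norm_nonneg _) this 2
  -- determinant of B equals product of eigenvalues
  have hmat : LinearMap.toMatrix b.toBasis b.toBasis (B : E →ₗ[ℝ] E) = Matrix.diagonal μ := by
    ext i j
    rw [LinearMap.toMatrix_apply, Matrix.diagonal_apply]
    have : (B : E →ₗ[ℝ] E) (b.toBasis j) = μ j • b.toBasis j := by
      rw [OrthonormalBasis.coe_toBasis]; exact hBb j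
    rw [this, map_smul, Module.Basis.repr_self]
    by_cases h : i = j
    · subst h; simp
    · simp [Finsupp.single_apply, h, Ne.symm h]
  have hdetB : LinearMap.det (B : E →ₗ[ℝ] E) = ∏ i, μ i := by
    rw [← LinearMap.det_toMatrix b.toBasis, hmat, Matrix.det_diagonal]
  -- determinant of B equals (det A)²
  have hdetAdj : LinearMap.det ((ContinuousLinearMap.adjoint A : E →L[ℝ] E) : E →ₗ[ℝ] E)
      = A.det := by
    have h1 : LinearMap.toContinuousLinearMap (A : E →ₗ[ℝ] E) = A := by ext x; rfl
    have hcoe : ((ContinuousLinearMap.adjoint A : E →L[ℝ] E) : E →ₗ[ℝ] E)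
        = LinearMap.adjoint (A : E →ₗ[ℝ] E) := by
      rw [LinearMap.adjoint_eq_toCLM_adjoint, h1]
    rw [hcoe, ← LinearMap.det_toMatrix b.toBasis, LinearMap.toMatrix_adjoint b b,
      Matrix.det_conjTranspose]
    rw [star_trivial, LinearMap.det_toMatrix]
  have hdetB2 : LinearMap.det (B : E →ₗ[ℝ] E) = A.det ^ 2 := by
    have : (B : E →ₗ[ℝ] E)
        = ((ContinuousLinearMap.adjoint A : E →L[ℝ] E) : E →ₗ[ℝ] E).comp (A : E →ₗ[ℝ] E) := rfl
    rw [this, LinearMap.det_comp, hdetAdj]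
    rw [show LinearMap.det (A : E →ₗ[ℝ] E) = A.det from rfl]
    ring
  have hAnorm_pos : 0 < ‖A‖ := by
    rcases eq_or_lt_of_le (norm_nonneg A) with h | h
    · exfalso
      rw [← h, zero_pow (by omega : n ≠ 0)] at heq
      exact absurd heq.symm (ne_of_gt hdet)
    · exact h
  set c : ℝ := ‖A‖ ^ 2 with hc
  have hc_pos : 0 < c := by positivity
  have hprod : ∏ i, μ i = c ^ n := by
    rw [← hdetB, hdetB2, ← heq, hc, ← pow_mul, ← pow_mul, Nat.mul_comm]
  -- all eigenvalues equal c
  have hμ_all : ∀ i, μ i = c := by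
    intro i
    by_contra hne
    have hlt : μ i < c := lt_of_le_of_ne (hμ_le i) hne
    have hkey : ∏ j, μ j < c ^ n := by
      have h1 : ∏ j, μ j = μ i * ∏ j ∈ Finset.univ.erase i, μ j := by
        rw [← Finset.prod_erase_mul Finset.univ μ (Finset.mem_univ i)]; ring
      have h2 : ∏ j ∈ Finset.univ.erase i, μ j ≤ ∏ j ∈ Finset.univ.erase i, c :=
        Finset.prod_le_prod (fun j _ => hμ_nonneg j) (fun j _ => hμ_le j)
      have h3 : (∏ j ∈ Finset.univ.erase i, (c : ℝ)) = c ^ (n - 1) := by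
        rw [Finset.prod_const, Finset.card_erase_of_mem (Finset.mem_univ i)]
        simp [Fintype.card_fin]
      have h4 : μ i * ∏ j ∈ Finset.univ.erase i, μ j ≤ μ i * c ^ (n - 1) := by
        rw [← h3]; exact mul_le_mul_of_nonneg_left h2 (hμ_nonneg i)
      have h5 : μ i * c ^ (n - 1) < c * c ^ (n - 1) :=
        mul_lt_mul_of_pos_right hlt (by positivity)
      have h6 : c * c ^ (n - 1) = c ^ n := by
        rw [← pow_succ']
        congr 1
        omega
      rw [h1]
      calc μ i * ∏ j ∈ Finset.univ.erase i, μ j ≤ μ i * c ^ (n - 1) := h4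
        _ < c * c ^ (n - 1) := h5
        _ = c ^ n := h6
    rw [hprod] at hkey
    exact lt_irrefl _ hkey
  -- B = c • id
  have hBid : ∀ x : E, B x = c • x := by
    intro x
    have hx : x = ∑ i, b.repr x i • b i := (b.sum_repr x).symm
    conv_lhs => rw [hx]
    rw [map_sum]
    conv_rhs => rw [hx]
    rw [Finset.smul_sum]
    refine Finset.sum_congr rfl fun i _ => ?_
    rw [map_smul, hBb i, hμ_all i, smul_smul, smul_smul, mul_comm]
  intro u v
  rw [← hBinner, hBid, real_inner_smul_left]
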